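/- Let p(z) = z(z² − c²) with c > 0 and let T be a bounded operator on a Hilbert space with p(T) compact. If (λ_n) is a sequence of eigenvalues of T with λ_n → λ and λ_n pairwise distinct, then λ ∈ {0, c, −c}. -/

import Mathlib

open Filter Submodule Metric

theorem eigenvalue_accumulation_of_polynomially_compact
    {H : Type*} [NormedAddCommGroup H] [InnerProductSpace ℂ H] [CompleteSpace H]
    (T : H →L[ℂ] H) (c : ℝ) (hc : 0 < c)
    (hcpt : IsCompactOperator
      ⇑(T ^ 3 - ((c : ℂ) ^ 2) • T))
    (lam : ℕ → ℂ) (hdist : Function.Injective lam)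
    (heig : ∀ n, ∃ v : H, v ≠ 0 ∧ T v = lam n • v)
    (l : ℂ) (hlim : Filter.Tendsto lam Filter.atTop (nhds l)) :
    l ∈ ({(0 : ℂ), (c : ℂ), (-c : ℂ)} : Set ℂ) := by
  classical
  by_contra hl
  set p : ℂ → ℂ := fun z => z ^ 3 - (c : ℂ) ^ 2 * z with hp
  -- p l ≠ 0
  have hδ0 : p l ≠ 0 := by
    intro h
    apply hl
    have hfac : l * ((l - c) * (l + c)) = 0 := by
      have h' : l ^ 3 - (c : ℂ) ^ 2 * l = 0 := h
      linear_combination h'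
    rcases mul_eq_zero.mp hfac with h1 | h2
    · exact Or.inl h1
    · rcases mul_eq_zero.mp h2 with h3 | h4
      · exact Or.inr (Or.inl (sub_eq_zero.mp h3))
      · exact Or.inr (Or.inr (by simpa using eq_neg_of_add_eq_zero_left h4))
  set δ : ℝ := ‖p l‖ with hδdef
  have hδpos : 0 < δ := norm_pos_iff.mpr hδ0
  have hplim : Tendsto (fun n => p (lam n)) atTop (nhds (p l)) :=
    (hlim.pow 3).sub (tendsto_const_nhds.mul hlim)
  have hev : ∀ᶠ n in atTop, δ / 2 < ‖p (lam n)‖ :=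
    hplim.norm.eventually_const_lt (by linarith)
  obtain ⟨N, hN⟩ := eventually_atTop.mp hev
  choose v hv0 hveq using heig
  set K : H →L[ℂ] H := T ^ 3 - ((c : ℂ) ^ 2) • T with hKdef
  have hKv : ∀ n, K (v n) = p (lam n) • v n := by
    intro n
    have h3 : (T ^ 3) (v n) = (lam n ^ 3) • v n := by
      have h0 : (T ^ 3) (v n) = T (T (T (v n))) := by
        simp [pow_succ, ContinuousLinearMap.mul_apply]
      rw [h0]
      simp only [hveq, map_smul, smul_smul]
      ring_nf
    have : K (v n) = (lam n ^ 3) • v n - ((c : ℂ) ^ 2) • (lam n • v n) := by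
      simp [hKdef, ContinuousLinearMap.sub_apply, h3, hveq]
    rw [this, smul_smul, ← sub_smul]
  -- linear independence of eigenvectors
  have hli : LinearIndependent ℂ v := by
    apply Module.End.eigenvectors_linearIndependent' (T : H →ₗ[ℂ] H) lam hdist v
    intro n
    refine ⟨?_, hv0 n⟩
    rw [Module.End.mem_eigenspace_iff]
    simpa using hveq n
  -- shifted sequences
  set lam' : ℕ → ℂ := fun n => lam (n + N) with hlam'
  set v' : ℕ → H := fun n => v (n + N) with hv'
  have hli' : LinearIndependent ℂ v' := hli.comp (fun k => k + N) (add_left_injective N)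
  have hpbig : ∀ n, δ / 2 < ‖p (lam' n)‖ := fun n => hN (n + N) (Nat.le_add_left N n)
  set E : ℕ → Submodule ℂ H := fun n => span ℂ (v' '' Set.Iio n) with hE
  have hfin : ∀ n, FiniteDimensional ℂ (E n) := fun n =>
    FiniteDimensional.span_of_finite ℂ ((Set.finite_Iio n).image _)
  have hEmono : ∀ {m n : ℕ}, m ≤ n → E m ≤ E n := fun h =>
    span_mono (Set.image_mono (Set.Iio_subset_Iio h))
  have hv'mem : ∀ {k n : ℕ}, k < n → v' k ∈ E n := fun {k n} hk =>
    subset_span ⟨k, hk, rfl⟩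
  have hv'notmem : ∀ n, v' n ∉ E n := fun n =>
    hli'.notMem_span_image (by simp)
  haveI : ∀ n, CompleteSpace (E n) := fun n =>
    haveI := hfin n
    FiniteDimensional.complete ℂ (E n)
  set w : ℕ → H := fun n => v' n - (orthogonalProjection (E n) (v' n) : H) with hw
  have hworth : ∀ n, w n ∈ (E n)ᗮ := fun n =>
    Submodule.sub_starProjection_mem_orthogonal (K := E n) (v' n)
  have hw0 : ∀ n, w n ≠ 0 := by
    intro n h
    apply hv'notmem n
    have : v' n = (orthogonalProjection (E n) (v' n) : H) := by
      have := sub_eq_zero.mp h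
      exact this
    rw [this]
    exact SetLike.coe_mem _
  set u : ℕ → H := fun n => ((‖w n‖ : ℂ))⁻¹ • w n with hu
  have hunorm : ∀ n, ‖u n‖ = 1 := by
    intro n
    have hwn : ‖w n‖ ≠ 0 := norm_ne_zero_iff.mpr (hw0 n)
    simp only [hu, norm_smul, norm_inv, Complex.norm_real, Real.norm_eq_abs,
      abs_of_nonneg (norm_nonneg (w n))]
    field_simp
  have huorth : ∀ n, u n ∈ (E n)ᗮ := fun n => Submodule.smul_mem _ _ (hworth n)
  have humem : ∀ n, u n ∈ E (n + 1) := by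
    intro n
    apply Submodule.smul_mem
    exact sub_mem (hv'mem (Nat.lt_succ_self n))
      (hEmono (Nat.le_succ n) (SetLike.coe_mem _))
  -- key invariance
  have hKE : ∀ n, ∀ x ∈ E (n + 1), K x - p (lam' n) • x ∈ E n := by
    intro n
    set L : H →ₗ[ℂ] H := (K : H →ₗ[ℂ] H) - p (lam' n) • LinearMap.id with hL
    have hLapp : ∀ x : H, L x = K x - p (lam' n) • x := fun x => rfl
    suffices h : E (n + 1) ≤ (E n).comap L by
      intro x hx
      have := h hx
      rwa [Submodule.mem_comap, hLapp] at this
    rw [hE, span_le]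
    rintro _ ⟨k, hk, rfl⟩
    simp only [SetLike.mem_coe, Submodule.mem_comap, hLapp]
    have hLk : K (v' k) - p (lam' n) • v' k = (p (lam' k) - p (lam' n)) • v' k := by
      have hkk : K (v' k) = p (lam' k) • v' k := hKv (k + N)
      rw [hkk, ← sub_smul]
    rw [hLk]
    rcases lt_or_eq_of_le (Nat.lt_succ_iff.mp hk) with h' | h'
    · exact Submodule.smul_mem _ _ (hv'mem h')
    · subst h'; simp
  have hKEn : ∀ n, ∀ x ∈ E n, K x ∈ E n := by
    intro n x hx
    have h1 := hKE n x (hEmono (Nat.le_succ n) hx)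
    have h2 : K x = (K x - p (lam' n) • x) + p (lam' n) • x := by abel
    rw [h2]
    exact add_mem h1 (Submodule.smul_mem _ _ hx)
  -- separation
  have hsep : ∀ m n : ℕ, n < m → δ / 2 ≤ ‖K (u m) - K (u n)‖ := by
    intro m n hnm
    set z : H := (p (lam' m) • u m - K (u m)) + K (u n) with hz
    have hzE : z ∈ E m := by
      apply add_mem
      · have := hKE m (u m) (humem m)
        have h' : p (lam' m) • u m - K (u m) = -(K (u m) - p (lam' m) • u m) := by abel
        rw [h']
        exact neg_mem this
      · exact hEmono hnm (hKEn (n + 1) (u n) (humem n))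
    have heq : K (u m) - K (u n) = p (lam' m) • u m - z := by rw [hz]; abel
    have hinner : (inner ℂ (p (lam' m) • u m) (-z) : ℂ) = 0 := by
      rw [inner_neg_right, inner_smul_left,
        inner_left_of_mem_orthogonal hzE (huorth m)]
      simp
    have hpyth := norm_add_sq_eq_norm_sq_add_norm_sq_of_inner_eq_zero _ _ hinner
    have hnorm : ‖p (lam' m) • u m‖ = ‖p (lam' m)‖ := by
      rw [norm_smul, hunorm, mul_one]
    have h2 : K (u m) - K (u n) = p (lam' m) • u m + -z := by rw [heq]; abel
    rw [h2]
    have hb := hpbig m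
    nlinarith [norm_nonneg (p (lam' m) • u m + -z), norm_nonneg (-z : H), hδpos]
  -- compactness contradiction
  have hcpt' : IsCompactOperator ⇑(K : H →ₗ[ℂ] H) := hcpt
  have hScompact : IsCompact (closure ((K : H →ₗ[ℂ] H) '' Metric.closedBall (0 : H) 1)) :=
    hcpt'.isCompact_closure_image_closedBall (𝕜₁ := ℂ) 1
  have hmem : ∀ n, K (u n) ∈ closure ((K : H →ₗ[ℂ] H) '' Metric.closedBall (0 : H) 1) := by
    intro n
    apply subset_closure
    exact ⟨u n, by simp [Metric.mem_closedBall, dist_eq_norm, hunorm n], rfl⟩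
  obtain ⟨x, -, φ, hφ, hconv⟩ := hScompact.tendsto_subseq hmem
  have hcauchy : CauchySeq (fun k => K (u (φ k))) := hconv.cauchySeq
  rw [Metric.cauchySeq_iff] at hcauchy
  obtain ⟨M, hM⟩ := hcauchy (δ / 2) (by linarith)
  have hd := hM (M + 1) (Nat.le_succ M) M le_rfl
  rw [dist_eq_norm] at hd
  have := hsep (φ (M + 1)) (φ M) (hφ (Nat.lt_succ_self M))
  linarith
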